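/- Soundness of the rule (If-Trans): if OnlyThrough A₁ A₂ A₃ holds and OnlyIf A₁ A₃ A holds, then OnlyIf A₁ A₂ A holds. That is, if every execution from A₁-states to A₂-states must pass through an A₃-state, and A is a necessary precondition for reaching A₃-states from A₁-states, then A is a necessary precondition for reaching A₂-states from A₁-states. -/

import Mathlib

variable {S : Type*}

/-- A function `σ : Fin (n+1) → S` is a finite execution of the transition
relation `r` when consecutive states are related by `r`. -/
def IsExec (r : S → S → Prop) {n : ℕ} (σ : Fin (n + 1) → S) : Prop :=
  ∀ i : Fin n, r (σ i.castSucc) (σ i.succ)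

/-- `OnlyIf1 r A₁ A₂ A₃`: for every single step `r σ σ'` with `A₁ σ` and `A₂ σ'`,
we have `A₃ σ`. -/
def OnlyIf1 (r : S → S → Prop) (A₁ A₂ A₃ : S → Prop) : Prop :=
  ∀ σ σ' : S, r σ σ' → A₁ σ → A₂ σ' → A₃ σ

/-- `OnlyThrough r A₁ A₂ A₃`: every finite execution starting in an `A₁`-state and
ending in an `A₂`-state has some intermediate state satisfying `A₃`. -/
def OnlyThrough (r : S → S → Prop) (A₁ A₂ A₃ : S → Prop) : Prop :=
  ∀ (n : ℕ) (σ : Fin (n + 1) → S), IsExec r σ → A₁ (σ 0) → A₂ (σ (Fin.last n)) →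
    ∃ i : Fin (n + 1), A₃ (σ i)

/-- `OnlyIf r A₁ A₂ A₃`: every finite execution starting in an `A₁`-state and
ending in an `A₂`-state satisfies `A₃` at its first state. -/
def OnlyIf (r : S → S → Prop) (A₁ A₂ A₃ : S → Prop) : Prop :=
  ∀ (n : ℕ) (σ : Fin (n + 1) → S), IsExec r σ → A₁ (σ 0) → A₂ (σ (Fin.last n)) →
    A₃ (σ 0)

theorem ifTrans_sound (r : S → S → Prop) (A₁ A₂ A₃ A : S → Prop)
    (h₁ : OnlyThrough r A₁ A₂ A₃) (h₂ : OnlyIf r A₁ A₃ A) :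
    OnlyIf r A₁ A₂ A := by
  intro n σ hexec h1 h2
  obtain ⟨i, hi⟩ := h₁ n σ hexec h1 h2
  have hle : i.val + 1 ≤ n + 1 := i.isLt
  set τ : Fin (i.val + 1) → S := fun j => σ (Fin.castLE hle j) with hτ
  have hτexec : IsExec r τ := by
    intro j
    have := hexec ⟨j.val, lt_of_lt_of_le j.isLt (Nat.lt_succ_iff.mp i.isLt)⟩
    convert this using 2 <;> rfl
  have h0 : τ 0 = σ 0 := by simp [hτ]
  have hlast : τ (Fin.last i.val) = σ i := by
    simp only [hτ]; congr 1
  have := h₂ i.val τ hτexec (by rw [h0]; exact h1) (by rw [hlast]; exact hi)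
  rwa [h0] at this
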